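/- arXiv:2009.13127 — 6 statements merged into one kernel-verified Lean document; each statement's English description precedes it below -/
import Mathlib

section
/- Let W := (1/w) ∂/∂w on ℂ×. The time-1 map of W is defined and holomorphic on ℂ \ γ where γ := i√2·[-1,1], and there it equals w ↦ ±√(2 + w^2) (with the branch equal to w near w large real). -/
open Set

noncomputable def Dl (w : ℂ) : ℂ := w * (1 + 2 / w ^ 2) ^ ((1:ℂ)/2)

lemma gamma_zero : (0:ℂ) ∈ {w : ℂ | ∃ s : ℝ, |s| ≤ 1 ∧ w = Complex.I * ((Real.sqrt 2 : ℂ) * s)} :=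
  ⟨0, by norm_num, by simp⟩

lemma mem_slit {w : ℂ}
    (hw : w ∉ {w : ℂ | ∃ s : ℝ, |s| ≤ 1 ∧ w = Complex.I * ((Real.sqrt 2 : ℂ) * s)})
    {t : ℝ} (ht0 : 0 ≤ t) (ht1 : t ≤ 1) :
    (1 + 2 * (t:ℂ) / w ^ 2) ∈ Complex.slitPlane := by
  have hw0 : w ≠ 0 := fun h => hw (h ▸ gamma_zero)
  have hw2 : w ^ 2 ≠ 0 := pow_ne_zero _ hw0
  by_contra h
  rw [Complex.mem_slitPlane_iff] at h
  push_neg at h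
  obtain ⟨hre, him⟩ := h
  set z : ℂ := 1 + 2 * (t:ℂ) / w ^ 2 with hz
  set r : ℝ := z.re with hr
  have hzr : z = (r : ℂ) := Complex.ext rfl (by simpa using him)
  have hr0 : r ≤ 0 := hre
  have key : w ^ 2 * ((r:ℂ) - 1) = 2 * (t:ℂ) := by
    have : z - 1 = 2 * (t:ℂ) / w ^ 2 := by rw [hz]; ring
    rw [hzr] at this
    field_simp at this
    linear_combination this
  have hr1 : (r:ℝ) - 1 ≠ 0 := by intro h; exact absurd h (by intro h'; nlinarith)
  set c : ℝ := 2 * t / (r - 1) with hc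
  have hcw : w ^ 2 = (c : ℂ) := by
    rw [hc]
    push_cast
    rw [eq_div_iff (by exact_mod_cast hr1)]
    linear_combination key
  have hc0 : c ≤ 0 := div_nonpos_iff.mpr (Or.inl ⟨by linarith, by linarith⟩)
  have hcne : c ≠ 0 := by
    intro h; rw [h] at hcw; exact hw2 (by simpa using hcw)
  have hclt : c < 0 := lt_of_le_of_ne hc0 hcne
  have hcge : -2 ≤ c := by
    have h1 : c * (r - 1) = 2 * t := by rw [hc]; field_simp
    nlinarith [mul_nonneg (neg_nonneg.mpr hc0) (neg_nonneg.mpr hr0)]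
  set a := w.re with ha
  set b := w.im with hb
  have h1 : a ^ 2 - b ^ 2 = c := by
    have := congrArg Complex.re hcw
    simp [pow_two, Complex.mul_re] at this
    nlinarith [this]
  have h2 : a * b = 0 := by
    have := congrArg Complex.im hcw
    simp [pow_two, Complex.mul_im] at this
    nlinarith [this]
  have hbne : b ≠ 0 := by intro h; rw [h] at h1; nlinarith
  have ha0 : a = 0 := by rcases mul_eq_zero.mp h2 with h | h; exact h; exact absurd h hbne
  have hb2 : b ^ 2 ≤ 2 := by nlinarith
  have hs2 : Real.sqrt 2 ≠ 0 := by positivity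
  refine hw ⟨b / Real.sqrt 2, ?_, ?_⟩
  · rw [abs_div, abs_of_pos (by positivity : (0:ℝ) < Real.sqrt 2),
      div_le_one (by positivity)]
    have : |b| = Real.sqrt (b ^ 2) := (Real.sqrt_sq_eq_abs b).symm
    rw [this]
    exact Real.sqrt_le_sqrt hb2
  · have hbb : Real.sqrt 2 * (b / Real.sqrt 2) = b := by field_simp
    apply Complex.ext
    · simp [← ha, ha0, Complex.mul_re, Complex.mul_im]
    · have : (Complex.I * ((Real.sqrt 2 : ℂ) * ((b / Real.sqrt 2 : ℝ) : ℂ))).im = b := by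
        rw [show ((Real.sqrt 2 : ℂ) * ((b / Real.sqrt 2 : ℝ) : ℂ)) = ((Real.sqrt 2 * (b / Real.sqrt 2) : ℝ) : ℂ) by push_cast; ring, hbb]
        simp
      rw [this]

/-- For `W = (1/w) ∂/∂w`, the time-1 map is defined and holomorphic on
`ℂ \ γ`, `γ = i√2·[-1,1]`, where it satisfies `Δ(w)² = w² + 2`, with the branch
equal to `√(x²+2)` on the positive real axis (branch asymptotic to `w`). -/
theorem stmt2 :
    ∃ Δ : ℂ → ℂ,
      DifferentiableOn ℂ Δ
        {w : ℂ | ∃ s : ℝ, |s| ≤ 1 ∧ w = Complex.I * ((Real.sqrt 2 : ℂ) * s)}ᶜ ∧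
      (∀ w : ℂ, w ∉ {w : ℂ | ∃ s : ℝ, |s| ≤ 1 ∧ w = Complex.I * ((Real.sqrt 2 : ℂ) * s)} →
        (Δ w) ^ 2 = w ^ 2 + 2) ∧
      (∀ x : ℝ, 0 < x → Δ (x : ℂ) = (Real.sqrt (x ^ 2 + 2) : ℂ)) ∧
      (∀ w : ℂ, w ∉ {w : ℂ | ∃ s : ℝ, |s| ≤ 1 ∧ w = Complex.I * ((Real.sqrt 2 : ℂ) * s)} →
        ∃ z : ℝ → ℂ, z 0 = w ∧ z 1 = Δ w ∧
          ∀ t ∈ Icc (0 : ℝ) 1, z t ≠ 0 ∧ HasDerivAt z (1 / z t) t) := by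
  set γ := {w : ℂ | ∃ s : ℝ, |s| ≤ 1 ∧ w = Complex.I * ((Real.sqrt 2 : ℂ) * s)} with hγ
  have key : ∀ w ∉ γ, (1 + 2 / w ^ 2) ∈ Complex.slitPlane := by
    intro w hw
    have := mem_slit hw (t := 1) (by norm_num) (by norm_num)
    simpa using this
  have hne : ∀ w ∉ γ, w ≠ 0 := fun w hw h => hw (h ▸ gamma_zero)
  refine ⟨Dl, ?_, ?_, ?_, ?_⟩
  · intro w hw
    have hw' : w ∉ γ := hw
    have h0 : w ≠ 0 := hne w hw'
    apply DifferentiableAt.differentiableWithinAt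
    have hin : DifferentiableAt ℂ (fun y : ℂ => 1 + 2 / y ^ 2) w :=
      (differentiableAt_const _).add
        ((differentiableAt_const _).div (differentiableAt_id.pow 2) (pow_ne_zero _ h0))
    exact differentiableAt_id.mul (hin.cpow (differentiableAt_const _) (key w hw'))
  · intro w hw
    have h0 : w ≠ 0 := hne w hw
    have hu : (1 + 2 / w ^ 2) ≠ 0 := Complex.slitPlane_ne_zero (key w hw)
    have hsq : ((1 + 2 / w ^ 2) ^ ((1:ℂ)/2)) ^ 2 = 1 + 2 / w ^ 2 := by
      rw [sq, ← Complex.cpow_add _ _ hu]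
      norm_num
    rw [Dl, mul_pow, hsq]
    field_simp
  · intro x hx
    have hx2 : (0:ℝ) ≤ 1 + 2 / x ^ 2 := by positivity
    have h1 : ((1:ℂ) + 2 / (x:ℂ) ^ 2) = ((1 + 2 / x ^ 2 : ℝ) : ℂ) := by push_cast; ring
    rw [Dl, h1, show ((1:ℂ)/2) = (((1:ℝ)/2 : ℝ) : ℂ) by norm_num,
      ← Complex.ofReal_cpow hx2]
    rw [← Complex.ofReal_mul]
    norm_cast
    rw [← Real.sqrt_eq_rpow]
    nth_rewrite 1 [← Real.sqrt_sq hx.le]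
    rw [← Real.sqrt_mul (by positivity)]
    congr 1
    field_simp
  · intro w hw
    have h0 : w ≠ 0 := hne w hw
    have hw2 : w ^ 2 ≠ 0 := pow_ne_zero _ h0
    refine ⟨fun t => w * (1 + 2 * (t:ℂ) / w ^ 2) ^ ((1:ℂ)/2), ?_, ?_, ?_⟩
    · simp
    · rw [Dl]; norm_num
    · intro t ht
      have hslit := mem_slit hw ht.1 ht.2
      have hu : (1 + 2 * (t:ℂ) / w ^ 2) ≠ 0 := Complex.slitPlane_ne_zero hslit
      have hcp : (1 + 2 * (t:ℂ) / w ^ 2) ^ ((1:ℂ)/2) ≠ 0 := by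
        rw [Ne, Complex.cpow_eq_zero_iff]; tauto
      refine ⟨mul_ne_zero h0 hcp, ?_⟩
      have hg : HasDerivAt (fun τ : ℂ => 1 + 2 * τ / w ^ 2) (2 / w ^ 2) (t:ℂ) := by
        simpa using ((hasDerivAt_id (t:ℂ)).const_mul 2).div_const (w ^ 2) |>.const_add 1
      have hf : HasDerivAt (fun τ : ℂ => w * (1 + 2 * τ / w ^ 2) ^ ((1:ℂ)/2))
          (w * (((1:ℂ)/2) * (1 + 2 * (t:ℂ) / w ^ 2) ^ ((1:ℂ)/2 - 1) * (2 / w ^ 2))) (t:ℂ) :=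
        (hg.cpow_const hslit).const_mul w
      have := hf.comp_ofReal
      convert this using 1
      have hinv : (1 + 2 * (t:ℂ) / w ^ 2) ^ ((1:ℂ)/2 - 1)
          = ((1 + 2 * (t:ℂ) / w ^ 2) ^ ((1:ℂ)/2))⁻¹ := by
        rw [show ((1:ℂ)/2 - 1) = -(1/2) by ring, Complex.cpow_neg]
      rw [hinv]
      set v := (1 + 2 * (t:ℂ) / w ^ 2) ^ ((1:ℂ)/2) with hv
      rw [div_eq_iff (mul_ne_zero h0 hcp)]
      field_simp
end

section
/- For the vector field X_0(z) = (λ z^2/(1+z^2)) ∂/∂z (case μ = 0), the time-1 map Δ_0 satisfies the algebraic relation z·Δ_0(z)^2 − (z^2 + λz − 1)·Δ_0(z) − z = 0 for all z near 0. -/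
open Set

/-- For `X₀(z) = λ z²/(1+z²) ∂/∂z` (case `μ = 0`), the time-1 map `Δ₀` satisfies
`z Δ₀(z)² − (z² + λz − 1) Δ₀(z) − z = 0` near `0`. -/
theorem stmt3 (lam : ℝ) (hlam : 0 < lam)
    (U : Set ℂ) (hU : U ∈ nhds (0 : ℂ))
    (Δ : ℂ → ℂ) (γ : ℂ → ℝ → ℂ)
    (hinit : ∀ z ∈ U, γ z 0 = z)
    (hend : ∀ z ∈ U, γ z 1 = Δ z)
    (hreg : ∀ z ∈ U, ∀ t ∈ Icc (0 : ℝ) 1, 1 + (γ z t) ^ 2 ≠ 0)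
    (hode : ∀ z ∈ U, ∀ t ∈ Icc (0 : ℝ) 1,
      HasDerivAt (γ z) ((lam : ℂ) * (γ z t) ^ 2 / (1 + (γ z t) ^ 2)) t) :
    ∀ z ∈ U, z * (Δ z) ^ 2 - (z ^ 2 + (lam : ℂ) * z - 1) * Δ z - z = 0 := by
  intro z hz
  -- the auxiliary function
  set g : ℝ → ℂ := γ z with hg
  have hreg' := hreg z hz
  have hode' := hode z hz
  -- coefficient function
  set c : ℝ → ℂ := fun t => (lam : ℂ) * g t / (1 + (g t) ^ 2) with hc
  set ψ : ℝ → ℂ := fun t => z * (g t * g t) + (1 - z ^ 2 - (lam : ℂ) * (t : ℝ) * z) * g t - z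
    with hψ
  -- derivative of ψ
  have hψ' : ∀ t ∈ Icc (0 : ℝ) 1, HasDerivAt ψ (c t * ψ t) t := by
    intro t ht
    have hγ := hode' t ht
    have hlin : HasDerivAt (fun s : ℝ => ((s : ℝ) : ℂ)) 1 t := by
      have h := Complex.ofRealCLM.hasDerivAt (x := t)
      simp at h
      exact h
    have h1 := (hγ.mul hγ).const_mul z
    have h2 : HasDerivAt (fun s => (1 - z ^ 2 - (lam : ℂ) * ((s : ℝ) : ℂ) * z) * g s)
        ((0 - 0 - (lam : ℂ) * 1 * z) * g t +
          (1 - z ^ 2 - (lam : ℂ) * (t : ℝ) * z) * ((lam : ℂ) * (g t) ^ 2 / (1 + (g t) ^ 2)))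
        t := by
      have hcoef : HasDerivAt (fun s : ℝ => (1 - z ^ 2 - (lam : ℂ) * ((s : ℝ) : ℂ) * z))
          (0 - 0 - (lam : ℂ) * 1 * z) t := by
        have := ((hlin.const_mul (lam : ℂ)).mul_const z)
        have h := (((hasDerivAt_const t (1 : ℂ)).sub (hasDerivAt_const t (z ^ 2))).sub this)
        simp at h ⊢
        exact h
      exact hcoef.mul hγ
    have h3 := (h1.add h2).sub_const z
    refine HasDerivAt.congr_deriv (f := ψ) h3 ?_
    symm
    have hne := hreg' t ht
    show c t * ψ t = _
    simp only [hc, hψ, hg]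
    field_simp
    ring
  -- ψ vanishes at 0
  have hψ0 : ψ 0 = 0 := by
    have h0 : g 0 = z := hinit z hz
    simp only [hψ, h0]
    push_cast
    ring
  -- bound for c on the interval
  obtain ⟨C, hC⟩ : ∃ C, ∀ t ∈ Icc (0 : ℝ) 1, ‖c t‖ ≤ C := by
    have hgc : ContinuousOn g (Icc 0 1) := fun t ht => ((hode' t ht).continuousAt).continuousWithinAt
    have hcc : ContinuousOn c (Icc 0 1) := by
      apply ContinuousOn.div
      · exact continuousOn_const.mul hgc
      · exact continuousOn_const.add (hgc.pow 2)
      · exact hreg'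
    exact (isCompact_Icc.exists_bound_of_continuousOn hcc)
  have hC0 : 0 ≤ C := le_trans (norm_nonneg _) (hC 0 ⟨le_refl _, zero_le_one⟩)
  -- clamp function
  set pr : ℝ → ℝ := fun t => min (max t 0) 1 with hpr
  have hprmem : ∀ t, pr t ∈ Icc (0 : ℝ) 1 := fun t =>
    ⟨le_min (le_max_right t 0) zero_le_one, min_le_right _ _⟩
  have hpreq : ∀ t ∈ Icc (0 : ℝ) 1, pr t = t := by
    intro t ht
    simp [hpr, max_eq_left ht.1, min_eq_left ht.2]
  -- vector field
  set v : ℝ → ℂ → ℂ := fun t x => c (pr t) * x with hv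
  have hlip : ∀ t, LipschitzWith C.toNNReal (v t) := by
    intro t
    have : LipschitzWith ‖c (pr t)‖₊ (fun x : ℂ => c (pr t) * x) := by
      apply LipschitzWith.of_dist_le_mul
      intro x y
      simp [dist_eq_norm, ← mul_sub, coe_nnnorm]
    exact this.weaken (by
      rw [← NNReal.coe_le_coe, coe_nnnorm, Real.coe_toNNReal _ hC0]
      exact hC _ (hprmem t))
  have hcont : ContinuousOn ψ (Icc 0 1) := fun t ht =>
    ((hψ' t ht).continuousAt).continuousWithinAt
  have huniq := ODE_solution_unique (v := v) (K := C.toNNReal) hlip (f := ψ)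
    (g := fun _ => 0) (a := 0) (b := 1)
    hcont
    (by
      intro t ht
      have h := hψ' t (Ico_subset_Icc_self ht)
      have : v t (ψ t) = c t * ψ t := by rw [hv]; simp [hpreq t (Ico_subset_Icc_self ht)]
      rw [this]
      exact h.hasDerivWithinAt)
    continuousOn_const
    (by
      intro t ht
      have : v t 0 = 0 := by simp [hv]
      rw [this]
      exact (hasDerivAt_const t (0 : ℂ)).hasDerivWithinAt)
    (by simpa using hψ0)
  have h1 : ψ 1 = 0 := huniq ⟨zero_le_one, le_refl _⟩
  have hΔ : g 1 = Δ z := hend z hz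
  rw [hψ] at h1
  simp only [hΔ] at h1
  push_cast at h1
  linear_combination h1
end

section
/- Let X be a holomorphic vector field on a domain, f a holomorphic function, and suppose the time-f flow Ψ(z) := Φ_X^{f(z)}(z) is holomorphic near z. Set X_f := X/(1 + X·f). Then (X_f · Ψ)(z) = X(Ψ(z)), i.e. X·Ψ/(1 + X·f) = X ∘ Ψ. In particular if Ψ is locally biholomorphic then Ψ^* X = X_f. -/
open Set Filter Metric Topology

/-- Group law for the flow, from uniqueness of ODE solutions plus analyticity. -/
lemma flow_group (R : ℂ → ℂ) (Φ : ℂ → ℂ → ℂ)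
    (hR : Differentiable ℂ R)
    (hinit : ∀ z : ℂ, Φ 0 z = z)
    (hflow : ∀ z t : ℂ, HasDerivAt (fun s => Φ s z) (R (Φ t z)) t) :
    ∀ z s t : ℂ, Φ t (Φ s z) = Φ (t + s) z := by
  intro z s t
  set a : ℂ → ℂ := fun t => Φ t (Φ s z) with ha_def
  set b : ℂ → ℂ := fun t => Φ (t + s) z with hb_def
  have ha' : ∀ t : ℂ, HasDerivAt a (R (a t)) t := hflow (Φ s z)
  have hb' : ∀ t : ℂ, HasDerivAt b (R (b t)) t := by
    intro t
    have h := ((hflow z (t + s)).comp t ((hasDerivAt_id t).add_const s))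
    rw [mul_one] at h
    exact h
  have haA : AnalyticOnNhd ℂ a univ := fun x _ =>
    (Differentiable.analyticAt (fun x => (ha' x).differentiableAt) x)
  have hbA : AnalyticOnNhd ℂ b univ := fun x _ =>
    (Differentiable.analyticAt (fun x => (hb' x).differentiableAt) x)
  have hab0 : a 0 = b 0 := by simp [ha_def, hb_def, hinit]
  -- Lipschitz neighborhood of R at a 0
  obtain ⟨K, u, hu, hKu⟩ : ∃ K, ∃ u ∈ 𝓝 (a 0), LipschitzOnWith K R u :=
    ((hR.contDiff (n := 1)).contDiffAt).exists_lipschitzOnWith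
  -- real restrictions
  have har : ∀ x : ℝ, HasDerivAt (fun y : ℝ => a y) (R (a x)) x :=
    fun x => (ha' x).comp_ofReal
  have hbr : ∀ x : ℝ, HasDerivAt (fun y : ℝ => b y) (R (b x)) x :=
    fun x => (hb' x).comp_ofReal
  have hacont : ContinuousAt (fun y : ℝ => a y) 0 := (har 0).continuousAt
  have hbcont : ContinuousAt (fun y : ℝ => b y) 0 := (hbr 0).continuousAt
  have hbu : b 0 ∈ u := hab0 ▸ mem_of_mem_nhds hu
  have hae : ∀ᶠ x : ℝ in 𝓝 0, a x ∈ u := by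
    have : Tendsto (fun y : ℝ => a y) (𝓝 0) (𝓝 (a 0)) := by
      simpa using hacont.tendsto
    exact this.eventually_mem hu
  have hbe : ∀ᶠ x : ℝ in 𝓝 0, b x ∈ u := by
    have : Tendsto (fun y : ℝ => b y) (𝓝 0) (𝓝 (b 0)) := by
      simpa using hbcont.tendsto
    exact this.eventually_mem (hab0 ▸ hu)
  have huniq : (fun y : ℝ => a y) =ᶠ[𝓝 (0:ℝ)] (fun y : ℝ => b y) := by
    apply ODE_solution_unique_of_eventually (v := fun _ w => R w) (s := fun _ => u)
      (Filter.Eventually.of_forall fun _ => hKu)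
    · filter_upwards [hae] with x hx
      exact ⟨har x, hx⟩
    · filter_upwards [hbe] with x hx
      exact ⟨hbr x, hx⟩
    · exact hab0
  -- upgrade to frequently-eq in ℂ and apply the identity theorem
  obtain ⟨ε, hε, heq⟩ := Metric.eventually_nhds_iff.mp huniq
  have hfreq : ∃ᶠ w in 𝓝[≠] (0:ℂ), a w = b w := by
    rw [Filter.frequently_iff]
    intro V hV
    obtain ⟨δ, hδ, hball⟩ := Metric.mem_nhdsWithin_iff.mp hV
    set x : ℝ := min δ ε / 2 with hx_def
    have hx0 : 0 < x := by positivity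
    have hxδ : x < δ := by
      have : min δ ε ≤ δ := min_le_left _ _
      linarith
    have hxε : x < ε := by
      have : min δ ε ≤ ε := min_le_right _ _
      linarith
    refine ⟨(x : ℂ), hball ⟨?_, ?_⟩, ?_⟩
    · simp only [mem_ball, Complex.dist_eq, sub_zero, Complex.norm_real, Real.norm_eq_abs]
      rwa [abs_of_pos hx0]
    · simp only [mem_compl_iff, mem_singleton_iff, Complex.ofReal_eq_zero]
      exact hx0.ne'
    · have := heq (y := x) (by rwa [Real.dist_eq, sub_zero, abs_of_pos hx0])
      exact this
  have := haA.eq_of_frequently_eq hbA hfreq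
  exact congrFun this t

/-- If `Ψ(z) = Φ_X^{f(z)}(z)` is holomorphic, then `X·Ψ/(1 + X·f) = X ∘ Ψ`,
i.e. `R(z)·Ψ'(z) = (1 + R(z) f'(z))·R(Ψ(z))`; in particular, where `Ψ` is locally
biholomorphic it conjugates `X_f = X/(1 + X·f)` to `X`. -/
theorem stmt5 (U : Set ℂ) (hU : IsOpen U) (R f : ℂ → ℂ) (Φ : ℂ → ℂ → ℂ)
    (hR : Differentiable ℂ R)
    (hf : DifferentiableOn ℂ f U)
    (hinit : ∀ z : ℂ, Φ 0 z = z)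
    (hflow : ∀ z t : ℂ, HasDerivAt (fun s => Φ s z) (R (Φ t z)) t)
    (hΦz : ∀ t : ℂ, Differentiable ℂ fun z => Φ t z)
    (hΨ : DifferentiableOn ℂ (fun z => Φ (f z) z) U) :
    ∀ z ∈ U, R z * deriv (fun w => Φ (f w) w) z
      = (1 + R z * deriv f z) * R (Φ (f z) z) := by
  intro z hz
  have hgroup := flow_group R Φ hR hinit hflow
  set Ψ : ℂ → ℂ := fun w => Φ (f w) w with hΨ_def
  -- Ψ differentiable at z
  have hΨz : HasDerivAt Ψ (deriv Ψ z) z :=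
    ((hΨ.differentiableAt (hU.mem_nhds hz))).hasDerivAt
  -- the flow curve c ε = Φ ε z
  set c : ℂ → ℂ := fun ε => Φ ε z with hc_def
  have hc0 : c 0 = z := hinit z
  have hc' : HasDerivAt c (R z) 0 := by
    have := hflow z 0
    rwa [hinit z] at this
  -- f differentiable at z
  have hfz : HasDerivAt f (deriv f z) z :=
    (hf.differentiableAt (hU.mem_nhds hz)).hasDerivAt
  -- g ε = f (c ε) + ε
  set g : ℂ → ℂ := fun ε => f (c ε) + ε with hg_def
  have hg' : HasDerivAt g (deriv f z * R z + 1) 0 := by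
    have h1 : HasDerivAt (fun ε => f (c ε)) (deriv f z * R z) 0 := by
      have := (hc0 ▸ hfz : HasDerivAt f (deriv f z) (c 0)).comp 0 hc'
      exact this
    exact h1.add (hasDerivAt_id 0)
  have hg0 : g 0 = f z := by simp [hg_def, hc0]
  -- the two expressions for h = Ψ ∘ c
  have hkey : (fun ε => Ψ (c ε)) = fun ε => Φ (g ε) z := by
    funext ε
    simp only [hΨ_def, hg_def, hc_def]
    exact hgroup z ε (f (Φ ε z))
  have hD1 : HasDerivAt (fun ε => Ψ (c ε)) (deriv Ψ z * R z) 0 := by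
    have := (hc0 ▸ hΨz : HasDerivAt Ψ (deriv Ψ z) (c 0)).comp 0 hc'
    exact this
  have hD2 : HasDerivAt (fun ε => Φ (g ε) z)
      (R (Φ (f z) z) * (deriv f z * R z + 1)) 0 := by
    have := (hflow z (g 0)).comp 0 hg'
    rwa [hg0] at this
  rw [hkey] at hD1
  have := hD1.unique hD2
  calc R z * deriv Ψ z = deriv Ψ z * R z := by ring
    _ = R (Φ (f z) z) * (deriv f z * R z + 1) := this
    _ = (1 + R z * deriv f z) * R (Φ (f z) z) := by ring
end

section
/- With X, f, X_f := X/(1+X·f) as above and Ψ(z) := Φ_X^{f(z)}(z) locally holomorphic, the time-1 maps satisfy Ψ ∘ Δ_f = Δ ∘ Ψ, where Δ_f is the time-1 map of X_f and Δ that of X. -/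
open Set
open Metric

private lemma chainCR {F : ℂ → ℂ} {g : ℝ → ℂ} {F' g' : ℂ} {t : ℝ}
    (hF : HasDerivAt F F' (g t)) (hg : HasDerivAt g g' t) :
    HasDerivAt (fun s => F (g s)) (g' * F') t := by
  have h := (hF.hasFDerivAt.restrictScalars ℝ).comp_hasDerivAt t hg
  have h' : HasDerivAt (F ∘ g) (g' * F') t := by simpa [mul_comm] using h
  exact h'

private lemma lip_on_ball {g : ℂ → ℂ} (hg : Differentiable ℂ g) (M : ℝ) :
    ∃ K : NNReal, LipschitzOnWith K g (closedBall (0:ℂ) M) := by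
  have han : AnalyticOnNhd ℂ g univ := hg.differentiableOn.analyticOnNhd isOpen_univ
  have hder : ContinuousOn (deriv g) (closedBall (0:ℂ) M) :=
    (han.deriv.continuousOn).mono (subset_univ _)
  obtain ⟨C, hC⟩ := (isCompact_closedBall (0:ℂ) M).exists_bound_of_continuousOn hder
  refine ⟨C.toNNReal, Convex.lipschitzOnWith_of_nnnorm_deriv_le
    (fun x _ => hg.differentiableAt) (fun x hx => ?_) (convex_closedBall _ _)⟩
  rw [← norm_toNNReal]
  exact Real.toNNReal_le_toNNReal (hC x hx)

private lemma coe_hasDerivAt (t : ℝ) : HasDerivAt (fun x : ℝ => (x : ℂ)) 1 t := by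
  have h := Complex.ofRealCLM.hasDerivAt (x := t)
  simp only [Complex.ofRealCLM_apply, Complex.ofReal_one] at h
  exact h

private lemma flow_real_deriv {R : ℂ → ℂ} {Φ : ℂ → ℂ → ℂ}
    (hflow : ∀ z t : ℂ, HasDerivAt (fun s => Φ s z) (R (Φ t z)) t)
    (w : ℂ) (c : ℂ) (x : ℝ) :
    HasDerivAt (fun x : ℝ => Φ (↑x + c) w) (R (Φ (↑x + c) w)) x := by
  have hc : HasDerivAt (fun x : ℝ => ((x : ℂ) + c)) 1 x := (coe_hasDerivAt x).add_const c
  simpa using chainCR (F := fun s => Φ s w) (g := fun x : ℝ => ((x : ℂ) + c))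
    (hflow w (↑x + c)) hc

private lemma grp_real {R : ℂ → ℂ} {Φ : ℂ → ℂ → ℂ}
    (hR : Differentiable ℂ R)
    (hinit : ∀ z : ℂ, Φ 0 z = z)
    (hflow : ∀ z t : ℂ, HasDerivAt (fun s => Φ s z) (R (Φ t z)) t)
    (t z : ℂ) (x : ℝ) : Φ ↑x (Φ t z) = Φ (↑x + t) z := by
  set F : ℝ → ℂ := fun x => Φ ↑x (Φ t z) with hFdef
  set G : ℝ → ℂ := fun x => Φ (↑x + t) z with hGdef
  have hF : ∀ x : ℝ, HasDerivAt F (R (F x)) x := by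
    intro x
    simpa using flow_real_deriv hflow (Φ t z) 0 x
  have hG : ∀ x : ℝ, HasDerivAt G (R (G x)) x := fun x => flow_real_deriv hflow z t x
  set b : ℝ := |x| + 1 with hb
  obtain ⟨M₁, hM₁⟩ := (isCompact_Icc (a := -b) (b := b)).exists_bound_of_continuousOn
    (fun τ hτ => (hF τ).continuousAt.continuousWithinAt)
  obtain ⟨M₂, hM₂⟩ := (isCompact_Icc (a := -b) (b := b)).exists_bound_of_continuousOn
    (fun τ hτ => (hG τ).continuousAt.continuousWithinAt)
  set M : ℝ := max M₁ M₂ with hM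
  obtain ⟨K, hK⟩ := lip_on_ball hR M
  have key : EqOn F G (Icc (-b) b) := by
    apply ODE_solution_unique_of_mem_Icc (v := fun _ y => R y)
      (s := fun _ => closedBall (0:ℂ) M) (K := K) (fun _ _ => hK)
      (t₀ := 0) (a := -b) (b := b)
    · constructor
      · have := abs_nonneg x; simp only [hb]; linarith
      · have := abs_nonneg x; simp only [hb]; linarith
    · exact fun τ hτ => (hF τ).continuousAt.continuousWithinAt
    · exact fun τ hτ => hF τ
    · intro τ hτ
      rw [mem_closedBall, dist_zero_right]
      exact le_trans (hM₁ τ (Ioo_subset_Icc_self hτ)) (le_max_left _ _)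
    · exact fun τ hτ => (hG τ).continuousAt.continuousWithinAt
    · exact fun τ hτ => hG τ
    · intro τ hτ
      rw [mem_closedBall, dist_zero_right]
      exact le_trans (hM₂ τ (Ioo_subset_Icc_self hτ)) (le_max_right _ _)
    · simp [hFdef, hGdef, hinit]
  have hx : x ∈ Icc (-b) b := by
    constructor <;> [nlinarith [neg_abs_le x]; nlinarith [le_abs_self x]]
  exact key hx

private lemma grp {R : ℂ → ℂ} {Φ : ℂ → ℂ → ℂ}
    (hR : Differentiable ℂ R)
    (hinit : ∀ z : ℂ, Φ 0 z = z)
    (hflow : ∀ z t : ℂ, HasDerivAt (fun s => Φ s z) (R (Φ t z)) t)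
    (s t z : ℂ) : Φ s (Φ t z) = Φ (s + t) z := by
  have hF : Differentiable ℂ (fun s => Φ s (Φ t z)) := fun u => (hflow _ u).differentiableAt
  have hG : Differentiable ℂ (fun s => Φ (s + t) z) := by
    intro u
    exact ((hflow z (u + t)).comp u ((hasDerivAt_id u).add_const t)).differentiableAt
  have hseq : Filter.Tendsto (fun n : ℕ => ((((n:ℝ)+1)⁻¹ : ℝ) : ℂ)) Filter.atTop
      (nhdsWithin (0:ℂ) {(0:ℂ)}ᶜ) := by
    apply tendsto_nhdsWithin_of_tendsto_nhds_of_eventually_within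
    · have h1 : Filter.Tendsto (fun n : ℕ => ((n:ℝ)+1)⁻¹) Filter.atTop (nhds 0) :=
        tendsto_one_div_add_atTop_nhds_zero_nat |>.congr (by intro n; rw [one_div])
      have := (Complex.continuous_ofReal.tendsto 0).comp h1
      simpa [Function.comp_def] using this
    · filter_upwards with n
      simp only [mem_compl_iff, mem_singleton_iff]
      intro h
      have : (((n:ℝ)+1)⁻¹ : ℝ) = 0 := by exact_mod_cast h
      have : ((n:ℝ)+1) > 0 := by positivity
      simp_all
  have hfreq : ∃ᶠ w in nhdsWithin (0:ℂ) {(0:ℂ)}ᶜ,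
      (fun s => Φ s (Φ t z)) w = (fun s => Φ (s+t) z) w :=
    hseq.frequently (Filter.Frequently.of_forall fun n => grp_real hR hinit hflow t z _)
  have := (hF.differentiableOn.analyticOnNhd isOpen_univ).eq_of_frequently_eq
    (hG.differentiableOn.analyticOnNhd isOpen_univ) hfreq
  exact congrFun this s

/-- With `X_f := X/(1 + X·f)` and `Ψ(z) := Φ_X^{f(z)}(z)` holomorphic, the time-1
maps satisfy `Ψ ∘ Δ_f = Δ ∘ Ψ`, where `Δ_f` is the time-1 map of `X_f` and `Δ = Φ_X^1`. -/
theorem stmt6 (U : Set ℂ) (hU : IsOpen U) (R f : ℂ → ℂ) (Φ : ℂ → ℂ → ℂ)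
    (hR : Differentiable ℂ R)
    (hf : DifferentiableOn ℂ f U)
    (hden : ∀ z ∈ U, 1 + R z * deriv f z ≠ 0)
    (hinit : ∀ z : ℂ, Φ 0 z = z)
    (hflow : ∀ z t : ℂ, HasDerivAt (fun s => Φ s z) (R (Φ t z)) t)
    (hΦz : ∀ t : ℂ, Differentiable ℂ fun z => Φ t z)
    (hΨ : DifferentiableOn ℂ (fun z => Φ (f z) z) U)
    (γ : ℝ → ℂ)
    (hmem : ∀ t ∈ Icc (0 : ℝ) 1, γ t ∈ U)
    (hode : ∀ t ∈ Icc (0 : ℝ) 1,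
      HasDerivAt γ (R (γ t) / (1 + R (γ t) * deriv f (γ t))) t) :
    Φ (f (γ 1)) (γ 1) = Φ 1 (Φ (f (γ 0)) (γ 0)) := by
  classical
  set D : ℝ → ℂ := fun t => 1 + R (γ t) * deriv f (γ t) with hDdef
  have hD : ∀ t ∈ Icc (0:ℝ) 1, D t ≠ 0 := fun t ht => hden (γ t) (hmem t ht)
  have hfγ : ∀ t ∈ Icc (0:ℝ) 1, HasDerivAt f (deriv f (γ t)) (γ t) := fun t ht =>
    (hf.differentiableAt (hU.mem_nhds (hmem t ht))).hasDerivAt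
  set a : ℝ → ℂ := fun t => ↑t + f (γ 0) - f (γ t) with hadef
  have ha : ∀ t ∈ Icc (0:ℝ) 1,
      HasDerivAt a (1 - (R (γ t) / D t) * deriv f (γ t)) t := by
    intro t ht
    have h1 : HasDerivAt (fun t : ℝ => ((t : ℂ) + f (γ 0))) 1 t := (coe_hasDerivAt t).add_const _
    have h2 : HasDerivAt (fun t : ℝ => f (γ t)) ((R (γ t) / D t) * deriv f (γ t)) t :=
      chainCR (F := f) (g := γ) (hfγ t ht) (hode t ht)
    exact h1.sub h2
  set ρ : ℝ → ℂ := fun t => Φ (a t) (γ 0) with hρdef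
  have hρ : ∀ t ∈ Icc (0:ℝ) 1, HasDerivAt ρ (R (ρ t) / D t) t := by
    intro t ht
    have h := chainCR (F := fun s => Φ s (γ 0)) (g := a)
      (hflow (γ 0) (a t)) (ha t ht)
    have hD'' : 1 + R (γ t) * deriv f (γ t) ≠ 0 := hD t ht
    have he : (1 - (R (γ t) / D t) * deriv f (γ t)) * R (ρ t) = R (ρ t) / D t := by
      simp only [hDdef]
      field_simp
      ring
    rwa [he] at h
  have hγc : ContinuousOn γ (Icc 0 1) := fun t ht => (hode t ht).continuousAt.continuousWithinAt
  have hρc : ContinuousOn ρ (Icc 0 1) := fun t ht => (hρ t ht).continuousAt.continuousWithinAt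
  obtain ⟨M₁, hM₁⟩ := isCompact_Icc.exists_bound_of_continuousOn hγc
  obtain ⟨M₂, hM₂⟩ := isCompact_Icc.exists_bound_of_continuousOn hρc
  set M : ℝ := max M₁ M₂ with hMdef
  obtain ⟨K₀, hK₀⟩ := lip_on_ball hR M
  have hDc : ContinuousOn (fun t => (D t)⁻¹) (Icc 0 1) := by
    apply ContinuousOn.inv₀ _ hD
    have hf' : ContinuousOn (deriv f) U := (hf.analyticOnNhd hU).deriv.continuousOn
    exact continuousOn_const.add ((hR.continuous.comp_continuousOn hγc).mul
      (hf'.comp hγc (fun t ht => hmem t ht)))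
  obtain ⟨C, hC⟩ := isCompact_Icc.exists_bound_of_continuousOn hDc
  set C' : ℝ := max C 0 with hC'def
  set K : NNReal := C'.toNNReal * K₀ with hKdef
  have hV : ∀ τ : ℝ, LipschitzOnWith K
      (fun y => R y / D τ) (if τ ∈ Icc (0:ℝ) 1 then closedBall (0:ℂ) M else ∅) := by
    intro τ
    by_cases hτ : τ ∈ Icc (0:ℝ) 1
    · rw [if_pos hτ]
      apply LipschitzOnWith.of_dist_le_mul
      intro y₁ h₁ y₂ h₂
      have heq : dist (R y₁ / D τ) (R y₂ / D τ) = ‖(D τ)⁻¹‖ * dist (R y₁) (R y₂) := by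
        simp only [dist_eq_norm, div_eq_mul_inv, ← sub_mul, norm_mul]
        ring
      rw [heq]
      calc ‖(D τ)⁻¹‖ * dist (R y₁) (R y₂)
          ≤ C' * ((K₀ : ℝ) * dist y₁ y₂) :=
            mul_le_mul (le_trans (hC τ hτ) (le_max_left _ _))
              (hK₀.dist_le_mul y₁ h₁ y₂ h₂) dist_nonneg (le_max_right C 0)
        _ = (K : ℝ) * dist y₁ y₂ := by
            simp only [hKdef, NNReal.coe_mul, Real.coe_toNNReal C' (le_max_right C 0)]
            ring
    · rw [if_neg hτ]
      exact lipschitzOnWith_empty _ _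
  have key : EqOn γ ρ (Icc 0 1) := by
    apply ODE_solution_unique_of_mem_Icc_right (v := fun τ y => R y / D τ)
      (s := fun τ => if τ ∈ Icc (0:ℝ) 1 then closedBall (0:ℂ) M else ∅) (K := K) (fun τ _ => hV τ)
      hγc (fun τ hτ => (hode τ (Ico_subset_Icc_self hτ)).hasDerivWithinAt) ?_
      hρc (fun τ hτ => (hρ τ (Ico_subset_Icc_self hτ)).hasDerivWithinAt) ?_ ?_
    · intro τ hτ
      simp only [if_pos (Ico_subset_Icc_self hτ), mem_closedBall, dist_zero_right]
      exact le_trans (hM₁ τ (Ico_subset_Icc_self hτ)) (le_max_left _ _)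
    · intro τ hτ
      simp only [if_pos (Ico_subset_Icc_self hτ), mem_closedBall, dist_zero_right]
      exact le_trans (hM₂ τ (Ico_subset_Icc_self hτ)) (le_max_right _ _)
    · simp [hρdef, hadef, hinit]
  have h1 : γ 1 = Φ (a 1) (γ 0) := key (right_mem_Icc.mpr zero_le_one)
  calc Φ (f (γ 1)) (γ 1)
      = Φ (f (γ 1)) (Φ (a 1) (γ 0)) := congrArg _ h1
    _ = Φ (f (γ 1) + a 1) (γ 0) := grp hR hinit hflow _ _ _
    _ = Φ (1 + f (γ 0)) (γ 0) := by
        apply congrArg (fun c => Φ c (γ 0))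
        simp only [hadef]
        push_cast
        ring
    _ = Φ 1 (Φ (f (γ 0)) (γ 0)) := (grp hR hinit hflow 1 (f (γ 0)) (γ 0)).symm
end

section
/- Let X be a holomorphic vector field on the punctured disc 𝒟 := ρ𝔻 \ {0} such that sup |X(r𝕊¹)| ≤ C/r for all 0 < r < ρ. If 0 < r < ρ and 0 < √(r²−2C) and √(r²+2C) < ρ, then for every |τ| ≤ 1 the flow Φ_X^τ is holomorphic on a neighborhood of the circle r𝕊¹ and maps r𝕊¹ into 𝒟; indeed √(r²−2C) ≤ |Φ_X^τ(z)| ≤ √(r²+2C) for |z| = r. -/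
open Set

/-- Flow control near a pole: if `|X| ≤ C/|z|` on the punctured disc of radius `ρ`,
`0 < √(r²−2C)` and `√(r²+2C) < ρ`, then for `|τ| ≤ 1` the time-`τ` flow maps the
circle of radius `r` into the punctured disc, with `√(r²−2C) ≤ |Φ_X^τ(z)| ≤ √(r²+2C)`. -/
theorem stmt7 (ρ C r : ℝ) (hC : 0 < C) (hr : 0 < r) (hrρ : r < ρ)
    (h1 : 2 * C < r ^ 2) (h2 : Real.sqrt (r ^ 2 + 2 * C) < ρ)
    (R : ℂ → ℂ)
    (hRd : DifferentiableOn ℂ R (Metric.ball (0 : ℂ) ρ \ {0}))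
    (hRb : ∀ z : ℂ, z ≠ 0 → ‖z‖ < ρ → ‖R z‖ ≤ C / ‖z‖)
    (τ : ℂ) (hτ : ‖τ‖ ≤ 1)
    (z : ℂ) (hz : ‖z‖ = r)
    (γ : ℝ → ℂ) (hγ0 : γ 0 = z)
    (hγmem : ∀ t ∈ Icc (0 : ℝ) 1, γ t ∈ Metric.ball (0 : ℂ) ρ \ {0})
    (hode : ∀ t ∈ Icc (0 : ℝ) 1, HasDerivAt γ (τ * R (γ t)) t) :
    Real.sqrt (r ^ 2 - 2 * C) ≤ ‖γ 1‖ ∧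
      ‖γ 1‖ ≤ Real.sqrt (r ^ 2 + 2 * C) ∧
      γ 1 ∈ Metric.ball (0 : ℂ) ρ \ {0} := by
  set φ : ℝ → ℝ := fun t => Complex.normSq (γ t) with hφ
  -- derivative of φ
  have hφd : ∀ t ∈ Icc (0 : ℝ) 1,
      HasDerivWithinAt φ (2 * (τ * R (γ t) * (starRingEnd ℂ) (γ t)).re) (Icc (0:ℝ) 1) t := by
    intro t ht
    have hγd := hode t ht
    have hconj : HasDerivAt (fun s => (starRingEnd ℂ) (γ s))
        ((starRingEnd ℂ) (τ * R (γ t))) t := by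
      have := (Complex.conjCLE.toContinuousLinearMap.hasFDerivAt
        (x := γ t)).comp_hasDerivAt t hγd
      simpa [Function.comp_def] using this
    have hmul : HasDerivAt (fun s => γ s * (starRingEnd ℂ) (γ s))
        (τ * R (γ t) * (starRingEnd ℂ) (γ t) + γ t * (starRingEnd ℂ) (τ * R (γ t))) t :=
      hγd.mul hconj
    have hre : HasDerivAt (fun s => (γ s * (starRingEnd ℂ) (γ s)).re)
        ((τ * R (γ t) * (starRingEnd ℂ) (γ t) + γ t * (starRingEnd ℂ) (τ * R (γ t))).re) t :=
      by simpa [Function.comp_def] using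
        (Complex.reCLM.hasFDerivAt (x := γ t * (starRingEnd ℂ) (γ t))).comp_hasDerivAt t hmul
    have heq : (fun s => (γ s * (starRingEnd ℂ) (γ s)).re) = φ := by
      funext s
      simp [hφ, Complex.mul_conj]
    have hderiv_eq : (τ * R (γ t) * (starRingEnd ℂ) (γ t)
        + γ t * (starRingEnd ℂ) (τ * R (γ t))).re
        = 2 * (τ * R (γ t) * (starRingEnd ℂ) (γ t)).re := by
      have : γ t * (starRingEnd ℂ) (τ * R (γ t))
          = (starRingEnd ℂ) (τ * R (γ t) * (starRingEnd ℂ) (γ t)) := by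
        simp [mul_comm]
      rw [Complex.add_re, this, Complex.conj_re]
      ring
    rw [heq, hderiv_eq] at hre
    exact hre.hasDerivWithinAt
  -- bound on derivative
  have hbound : ∀ t ∈ Icc (0 : ℝ) 1,
      ‖2 * (τ * R (γ t) * (starRingEnd ℂ) (γ t)).re‖ ≤ 2 * C := by
    intro t ht
    obtain ⟨hball, hne⟩ := hγmem t ht
    have hne0 : γ t ≠ 0 := by simpa using hne
    have hlt : ‖γ t‖ < ρ := by
      simpa [Complex.dist_eq] using Metric.mem_ball.mp hball
    have hR := hRb (γ t) hne0 hlt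
    have habs : ‖τ * R (γ t) * (starRingEnd ℂ) (γ t)‖ ≤ C := by
      rw [norm_mul, norm_mul, Complex.norm_conj]
      have hpos : (0 : ℝ) < ‖γ t‖ := by
        simpa using hne0
      calc ‖τ‖ * ‖R (γ t)‖ * ‖γ t‖
          ≤ 1 * (C / ‖γ t‖) * ‖γ t‖ := by
            apply mul_le_mul _ le_rfl hpos.le (by positivity)
            exact mul_le_mul hτ hR (by positivity) zero_le_one
        _ = C := by field_simp
    have := (Complex.abs_re_le_norm (τ * R (γ t) * (starRingEnd ℂ) (γ t))).trans habs
    rw [Real.norm_eq_abs, abs_mul, abs_two]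
    linarith
  -- mean value inequality
  have hmv : ‖φ 1 - φ 0‖ ≤ 2 * C * ‖(1 : ℝ) - 0‖ := by
    exact (convex_Icc (0:ℝ) 1).norm_image_sub_le_of_norm_hasDerivWithin_le
      hφd hbound (by constructor <;> norm_num) (by constructor <;> norm_num)
  have hφ0 : φ 0 = r ^ 2 := by
    rw [hφ]
    simp only [hγ0]
    rw [← Complex.sq_norm, hz]
  have hmv' : |φ 1 - r ^ 2| ≤ 2 * C := by
    rw [hφ0] at hmv; simpa using hmv
  have hlow : r ^ 2 - 2 * C ≤ φ 1 := by
    have := abs_le.mp hmv'; linarith [this.1]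
  have hup : φ 1 ≤ r ^ 2 + 2 * C := by
    have := abs_le.mp hmv'; linarith [this.2]
  have hφ1 : φ 1 = ‖γ 1‖ ^ 2 := by
    rw [hφ]; simp [← Complex.sq_norm]
  refine ⟨?_, ?_, hγmem 1 (by constructor <;> norm_num)⟩
  · have : Real.sqrt (r ^ 2 - 2 * C) ≤ Real.sqrt (‖γ 1‖ ^ 2) :=
      Real.sqrt_le_sqrt (by rw [← hφ1]; exact hlow)
    rwa [Real.sqrt_sq (norm_nonneg _)] at this
  · have : Real.sqrt (‖γ 1‖ ^ 2) ≤ Real.sqrt (r ^ 2 + 2 * C) :=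
      Real.sqrt_le_sqrt (by rw [← hφ1]; exact hup)
    rwa [Real.sqrt_sq (norm_nonneg _)] at this
end

section
/- Let a := e^{i5π/8}·ℝ_{>0} be a ray and z ∈ ℂ with Re z ≥ 0, z ≠ 0. Then sup_{ξ ∈ a} √|ξ|/|ξ − z| ≤ 1/(√(2|z|)·√(1 − cos(π/8))). -/
open Real

/-- For `ξ = e^{i5π/8} t` on the ray `a` and `z ≠ 0` with `Re z ≥ 0`,
`√|ξ|/|ξ − z| ≤ 1/(√(2|z|)·√(1 − cos(π/8)))`. -/
theorem stmt13 (z : ℂ) (hz : z ≠ 0) (hre : 0 ≤ z.re) (t : ℝ) (ht : 0 < t) :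
    Real.sqrt (‖Complex.exp (Complex.I * (5 * (Real.pi : ℂ) / 8)) * (t : ℂ)‖) /
        ‖Complex.exp (Complex.I * (5 * (Real.pi : ℂ) / 8)) * (t : ℂ) - z‖
      ≤ 1 / (Real.sqrt (2 * ‖z‖) * Real.sqrt (1 - Real.cos (Real.pi / 8))) := by
  have hπ := Real.pi_pos
  set c := Real.cos (π/8) with hc
  set r := ‖z‖ with hrdef
  have hr : 0 < r := norm_pos_iff.mpr hz
  have hc1 : c < 1 := by
    have hs : 0 < Real.sin (π/8) := Real.sin_pos_of_pos_of_lt_pi (by linarith) (by linarith)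
    nlinarith [Real.sin_sq_add_cos_sq (π/8), Real.cos_le_one (π/8)]
  have hc0 : 0 < c := Real.cos_pos_of_mem_Ioo ⟨by linarith, by linarith⟩
  have hco : Real.cos (5*π/8) ≤ 0 :=
    Real.cos_nonpos_of_pi_div_two_le_of_le (by linarith) (by linarith)
  have hs_eq : Real.sin (5*π/8) = c := by
    rw [← Real.cos_pi_div_two_sub, show π/2 - 5*π/8 = -(π/8) by ring, Real.cos_neg]
  set E := Complex.exp (Complex.I * (5 * (Real.pi : ℂ) / 8)) with hE
  have hEeq : E = Complex.ofReal (Real.cos (5*π/8)) + Complex.ofReal (Real.sin (5*π/8)) * Complex.I := by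
    rw [hE, mul_comm, show (5 * (Real.pi : ℂ) / 8) = ((5*π/8 : ℝ) : ℂ) by push_cast; ring,
      Complex.exp_mul_I, Complex.ofReal_cos, Complex.ofReal_sin]
  have hXre : (E * (t:ℂ) - z).re = Real.cos (5*π/8) * t - z.re := by
    rw [hEeq]
    simp [-Complex.ofReal_cos, -Complex.ofReal_sin]
  have hXim : (E * (t:ℂ) - z).im = c * t - z.im := by
    rw [hEeq]
    simp [-Complex.ofReal_cos, -Complex.ofReal_sin, hs_eq]
  have hzsq : z.re^2 + z.im^2 = r^2 := by
    rw [hrdef, Complex.sq_norm, Complex.normSq_apply]; ring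
  have him : z.im ≤ r := (abs_le.mp (Complex.abs_im_le_norm z)).2
  have h1c : 0 < 1 - c := by linarith
  have h2rc : 0 < 2 * r * (1 - c) := by positivity
  have key : 2 * r * (1 - c) * t ≤ (‖E * (t:ℂ) - z‖)^2 := by
    rw [← Complex.normSq_eq_norm_sq, Complex.normSq_apply, hXre, hXim]
    have htrig := Real.sin_sq_add_cos_sq (5*π/8)
    rw [hs_eq] at htrig
    have htrig2 : t^2 * c^2 + t^2 * (Real.cos (5*π/8))^2 = t^2 := by nlinarith [htrig]
    have h1 : 0 ≤ t * z.re * (-(Real.cos (5*π/8))) :=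
      mul_nonneg (mul_nonneg ht.le hre) (by linarith)
    have h2 : 0 ≤ t * c * (r - z.im) :=
      mul_nonneg (mul_nonneg ht.le hc0.le) (by linarith)
    nlinarith [htrig2, sq_nonneg (t - r), h1, h2, hzsq]
  have hA : 0 < ‖E * (t:ℂ) - z‖ := by
    have h0 : 0 < 2 * r * (1 - c) * t := mul_pos h2rc ht
    have h1 : 0 < (‖E * (t:ℂ) - z‖)^2 := lt_of_lt_of_le h0 key
    nlinarith [norm_nonneg (E * (t:ℂ) - z)]
  have habsN : Real.sqrt (‖E * (t:ℂ)‖) = Real.sqrt t := by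
    rw [norm_mul, Complex.norm_exp]
    simp [Complex.mul_re, abs_of_pos ht]
  have hB : Real.sqrt (2 * r) * Real.sqrt (1 - c) = Real.sqrt (2 * r * (1 - c)) := by
    rw [← Real.sqrt_mul (by positivity)]
  have hBpos : 0 < Real.sqrt (2 * r * (1 - c)) := Real.sqrt_pos.mpr h2rc
  rw [habsN, hB, div_le_div_iff₀ hA hBpos, one_mul]
  have hAle : Real.sqrt (2 * r * (1 - c)) * Real.sqrt t ≤ ‖E * (t:ℂ) - z‖ := by
    rw [← Real.sqrt_mul h2rc.le]
    rw [show ‖E * (t:ℂ) - z‖ = Real.sqrt ((‖E * (t:ℂ) - z‖)^2) by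
      rw [Real.sqrt_sq hA.le]]
    exact Real.sqrt_le_sqrt key
  calc Real.sqrt t * Real.sqrt (2 * r * (1 - c))
      = Real.sqrt (2 * r * (1 - c)) * Real.sqrt t := by ring
    _ ≤ _ := hAle
end
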